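/- Let y, z be non-orthogonal distinct rays in a complex Hilbert space, r ∈ [0,1], and x = ry + (1−r)z. Then p(x,y) = 1 − (1−r)(1 − p(y,z)) / (1 + 2√(r(1−r)p(y,z))), and for 0 < r ≤ 1 one has p(ry + (1−r)z, y) > p(y,z). -/

import Mathlib

local notation "⟪" x ", " y "⟫" => @inner ℂ _ _ x y

theorem p_superposition_component {H : Type*} [NormedAddCommGroup H]
    [InnerProductSpace ℂ H]
    (y z : Submodule ℂ H) (hyz_ne : y ≠ z) (v w : H)
    (hv : ‖v‖ = 1) (hw : ‖w‖ = 1)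
    (hy : y = Submodule.span ℂ {v}) (hz : z = Submodule.span ℂ {w})
    (hno : ⟪v, w⟫ ≠ 0)
    (him : (⟪v, w⟫).im = 0) (hre : 0 < (⟪v, w⟫).re)
    (r : ℝ) (hr0 : 0 ≤ r) (hr1 : r ≤ 1)
    (s : H) (hs : s = (Real.sqrt r : ℂ) • v + (Real.sqrt (1 - r) : ℂ) • w) :
    ‖⟪s, v⟫‖ ^ 2 / ‖s‖ ^ 2 =
      1 - (1 - r) * (1 - ‖⟪v, w⟫‖ ^ 2) /
        (1 + 2 * Real.sqrt (r * (1 - r) * (‖⟪v, w⟫‖ ^ 2))) ∧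
    (0 < r → ‖⟪v, w⟫‖ ^ 2 < ‖⟪s, v⟫‖ ^ 2 / ‖s‖ ^ 2) := by
  set c : ℝ := (⟪v, w⟫).re with hc
  have hvw : ⟪v, w⟫ = (c : ℂ) := Complex.ext rfl (by simp [him])
  have habs : ‖⟪v, w⟫‖ = c := by
    rw [hvw, Complex.norm_real, Real.norm_eq_abs, abs_of_pos hre]
  have hc1 : c ≤ 1 := by
    have := norm_inner_le_norm (𝕜 := ℂ) v w
    rw [hv, hw] at this; simpa [habs] using this
  have hclt1 : c < 1 := by
    rcases lt_or_eq_of_le hc1 with h | h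
    · exact h
    · exfalso
      have : ⟪v, w⟫ = 1 := by rw [hvw, h]; norm_num
      have hvweq := (inner_eq_one_iff_of_norm_eq_one hv hw).mp this
      exact hyz_ne (by rw [hy, hz, hvweq])
  set a := Real.sqrt r with hadef
  set b := Real.sqrt (1 - r) with hbdef
  have ha0 : 0 ≤ a := Real.sqrt_nonneg _
  have hb0 : 0 ≤ b := Real.sqrt_nonneg _
  have ha2 : a ^ 2 = r := Real.sq_sqrt hr0
  have hb2 : b ^ 2 = 1 - r := Real.sq_sqrt (by linarith)
  have hwv : ⟪w, v⟫ = (c : ℂ) := by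
    rw [← inner_conj_symm, hvw]; simp
  have hsv : ⟪s, v⟫ = ((a + b * c : ℝ) : ℂ) := by
    rw [hs, inner_add_left, inner_smul_left, inner_smul_left,
      inner_self_eq_norm_sq_to_K, hv, hwv]
    push_cast
    simp [Complex.conj_ofReal]
  have habsv : ‖⟪s, v⟫‖ = a + b * c := by
    rw [hsv, Complex.norm_real, Real.norm_eq_abs, abs_of_nonneg (by positivity)]
  have hns : ‖s‖ ^ 2 = 1 + 2 * (a * b * c) := by
    rw [hs, norm_add_sq (𝕜 := ℂ), inner_smul_left, inner_smul_right, hvw]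
    rw [norm_smul, norm_smul, hv, hw]
    simp [Complex.conj_ofReal, abs_of_nonneg ha0, abs_of_nonneg hb0]
    ring_nf
    nlinarith [ha2, hb2]
  have hsqrt : Real.sqrt (r * (1 - r) * c ^ 2) = a * b * c := by
    have h1 : r * (1 - r) * c ^ 2 = (a * b * c) ^ 2 := by
      linear_combination (-(1 - r) * c ^ 2) * ha2 + (-(a ^ 2 * c ^ 2)) * hb2
    rw [h1, Real.sqrt_sq (by positivity)]
  have hden : 0 < 1 + 2 * (a * b * c) := by positivity
  clear_value a b c
  clear hc hs hvw hwv hsv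
  constructor
  · rw [habsv, habs, hns, hsqrt]
    field_simp
    nlinarith [ha2, hb2]
  · intro hrpos
    rw [habsv, habs, hns]
    rw [lt_div_iff₀ hden]
    have hapos : 0 < a := hadef ▸ Real.sqrt_pos.mpr hrpos
    have key : 0 < (1 - c ^ 2) * (a ^ 2 + 2 * (a * b * c)) := by
      apply mul_pos (by nlinarith) (by positivity)
    have hsum : a ^ 2 + b ^ 2 = 1 := by rw [ha2, hb2]; ring
    nlinarith [key, hsum]
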